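/- Let n ≥ 1 and let k₀, k₁,…,k_{2n} be integers satisfying |k_j − k_{j+1}| ≥ 1 for every j = 0,1,…,2n−1. Then the integral I''ₙ = ∫_{−π}^{π} cos(η/2) · [sin((k₀+k_{2n})η/2)/sin(η/2)] · ∏_{j=0}^{2n−1} [sin((k_j−k_{j+1})η/2) / ((k_j−k_{j+1}) sin(η/2))] dη satisfies |I''ₙ| ≤ 2π. -/

import Mathlib

open Real intervalIntegral

noncomputable def Dk (e : ℕ) (η : ℝ) : ℝ :=
  ∑ r ∈ Finset.range e, Real.cos (((2*r - e + 1 : ℤ) : ℝ) * η / 2)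

lemma Dk_continuous (e : ℕ) : Continuous (Dk e) := by
  unfold Dk
  exact continuous_finset_sum _ (fun r _ => Real.continuous_cos.comp (by continuity))

noncomputable def SK (m : ℤ) (η : ℝ) : ℝ :=
  (if 0 ≤ m then (1:ℝ) else -1) * Dk m.natAbs η

lemma SK_continuous (m : ℤ) : Continuous (SK m) :=
  continuous_const.mul (Dk_continuous _)

lemma sin_mul_Dk (e : ℕ) (η : ℝ) :
    Real.sin (η/2) * Dk e η = Real.sin ((e:ℝ) * η / 2) := by
  unfold Dk
  rw [Finset.mul_sum]
  set f : ℕ → ℝ := fun r => Real.sin ((2*(r:ℝ) - e) * η / 2) / 2 with hf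
  have key : ∀ r ∈ Finset.range e,
      Real.sin (η/2) * Real.cos (((2*r - e + 1 : ℤ) : ℝ) * η / 2) = f (r+1) - f r := by
    intro r _
    have h2 := Real.two_mul_sin_mul_cos (η/2) (((2*r - e + 1 : ℤ) : ℝ) * η / 2)
    have e1 : η/2 - ((2*(r:ℝ) - e + 1)) * η / 2 = -((2*(r:ℝ) - e) * η / 2) := by ring
    have e2 : η/2 + ((2*(r:ℝ) - e + 1)) * η / 2 = (2*(((r:ℕ)+1:ℕ):ℝ) - e) * η / 2 := by
      push_cast; ring
    push_cast at h2
    push_cast [hf]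
    rw [e1, e2, Real.sin_neg] at h2
    push_cast at h2
    linarith
  rw [Finset.sum_congr rfl key, Finset.sum_range_sub f]
  simp only [hf]
  push_cast
  have : (2*(0:ℝ) - e) * η / 2 = -((e:ℝ) * η/2) := by ring
  rw [this, Real.sin_neg]
  ring_nf

lemma SK_spec (m : ℤ) (η : ℝ) (h : Real.sin (η/2) ≠ 0) :
    Real.sin ((m:ℝ)*η/2) / Real.sin (η/2) = SK m η := by
  have hD := sin_mul_Dk m.natAbs η
  unfold SK
  rcases le_or_gt 0 m with hm | hm
  · have hcast : ((m.natAbs : ℕ) : ℝ) = (m : ℝ) := by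
      rw [Nat.cast_natAbs]
      exact_mod_cast congrArg (Int.cast : ℤ → ℝ) (abs_of_nonneg hm)
    rw [if_pos hm, one_mul, ← hcast, ← hD, mul_comm, mul_div_assoc, div_self h, mul_one]
  · have hcast : ((m.natAbs : ℕ) : ℝ) = -(m : ℝ) := by
      rw [Nat.cast_natAbs]
      exact_mod_cast congrArg (Int.cast : ℤ → ℝ) (abs_of_nonpos hm.le)
    have : Real.sin ((m:ℝ)*η/2) = - Real.sin ((m.natAbs : ℝ) * η / 2) := by
      rw [hcast]; rw [show -(m:ℝ) * η / 2 = -((m:ℝ) * η / 2) by ring, Real.sin_neg, neg_neg]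
    rw [if_neg (not_le.mpr hm), this, ← hD]
    field_simp

lemma Icos (s : ℤ) : (∫ η in (-π)..π, Real.cos ((s:ℝ) * η)) = if s = 0 then 2*π else 0 := by
  split_ifs with h
  · simp [h, two_mul]
  · have hs : (s:ℝ) ≠ 0 := Int.cast_ne_zero.mpr h
    rw [intervalIntegral.integral_comp_mul_left (fun x => Real.cos x) hs]
    simp [integral_cos]

lemma IcosHalf (q : ℤ) (hq : q % 2 = 0) :
    (∫ η in (-π)..π, Real.cos ((q:ℝ) * η / 2)) = if q = 0 then 2*π else 0 := by
  obtain ⟨s, rfl⟩ : 2 ∣ q := Int.dvd_of_emod_eq_zero hq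
  have : ∀ η : ℝ, ((2*s : ℤ):ℝ) * η / 2 = (s:ℝ) * η := by intro η; push_cast; ring
  simp_rw [this, Icos s]
  simp

lemma triple_cos (x y z : ℝ) : Real.cos x * Real.cos y * Real.cos z
    = (Real.cos (x - y - z) + Real.cos (x - y + z) + Real.cos (x + y - z) + Real.cos (x + y + z)) / 4 := by
  have h1 := Real.two_mul_cos_mul_cos x y
  have h2 := Real.two_mul_cos_mul_cos (x - y) z
  have h3 := Real.two_mul_cos_mul_cos (x + y) z
  linear_combination (Real.cos z / 2) * h1 + h2 / 4 + h3 / 4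

lemma sum_if_le {c : ℝ} (hc : 0 ≤ c) (e : ℕ) (g : ℕ → ℤ) (hinj : ∀ r s, g r = g s → r = s) :
    ∑ r ∈ Finset.range e, (if g r = 0 then c else 0) ≤ c := by
  rw [← Finset.sum_filter]
  have hcard : ((Finset.range e).filter (fun r => g r = 0)).card ≤ 1 := by
    apply Finset.card_le_one.mpr
    intro a ha b hb
    simp only [Finset.mem_filter] at ha hb
    exact hinj a b (ha.2.trans hb.2.symm)
  calc ∑ _r ∈ (Finset.range e).filter (fun r => g r = 0), c
      = ((Finset.range e).filter (fun r => g r = 0)).card • c := by rw [Finset.sum_const]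
    _ ≤ 1 • c := nsmul_le_nsmul_left hc hcard
    _ = c := one_smul _ _

lemma ICDC (e : ℕ) (l : ℤ) (hpar : (l + e) % 2 = 0) :
    |∫ η in (-π)..π, Real.cos (η/2) * Dk e η * Real.cos ((l:ℝ)*η/2)| ≤ 2*π := by
  have hint : ∀ q : ℤ, IntervalIntegrable (fun η => Real.cos ((q:ℝ) * η / 2)) MeasureTheory.volume (-π) π := by
    intro q
    exact (Real.continuous_cos.comp (by continuity)).intervalIntegrable _ _
  -- rewrite integrand as a sum over r
  have hfun : ∀ η : ℝ, Real.cos (η/2) * Dk e η * Real.cos ((l:ℝ)*η/2)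
      = ∑ r ∈ Finset.range e,
          ((Real.cos (((l + e - 2*r : ℤ):ℝ) * η / 2)
          + Real.cos (((2*r - e + 2 + l : ℤ):ℝ) * η / 2)
          + Real.cos (((- l + e - 2*r : ℤ):ℝ) * η / 2)
          + Real.cos (((2*r - e + 2 - l : ℤ):ℝ) * η / 2)) / 4) := by
    intro η
    unfold Dk
    rw [Finset.mul_sum, Finset.sum_mul]
    refine Finset.sum_congr rfl (fun r _ => ?_)
    rw [triple_cos (η/2) (((2*r - e + 1 : ℤ) : ℝ) * η / 2) ((l:ℝ)*η/2)]
    push_cast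
    ring_nf
  have hpi : (0:ℝ) ≤ 2*π := by positivity
  simp_rw [hfun]
  rw [intervalIntegral.integral_finset_sum]
  swap
  · exact fun r _ => ((((hint _).add (hint _)).add (hint _)).add (hint _)).div_const 4
  have hterm : ∀ r ∈ Finset.range e,
      (∫ η in (-π)..π, ((Real.cos (((l + e - 2*r : ℤ):ℝ) * η / 2)
          + Real.cos (((2*r - e + 2 + l : ℤ):ℝ) * η / 2)
          + Real.cos (((- l + e - 2*r : ℤ):ℝ) * η / 2)
          + Real.cos (((2*r - e + 2 - l : ℤ):ℝ) * η / 2)) / 4))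
      = ((if (l + e - 2*r : ℤ) = 0 then 2*π else 0)
          + (if (2*r - e + 2 + l : ℤ) = 0 then 2*π else 0)
          + (if (- l + e - 2*r : ℤ) = 0 then 2*π else 0)
          + (if (2*r - e + 2 - l : ℤ) = 0 then 2*π else 0)) / 4 := by
    intro r _
    rw [intervalIntegral.integral_div,
        intervalIntegral.integral_add (((hint _).add (hint _)).add (hint _)) (hint _),
        intervalIntegral.integral_add ((hint _).add (hint _)) (hint _),
        intervalIntegral.integral_add (hint _) (hint _),
        IcosHalf _ (by omega), IcosHalf _ (by omega), IcosHalf _ (by omega), IcosHalf _ (by omega)]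
  rw [Finset.sum_congr rfl hterm]
  have hnn : ∀ (P : Prop) [Decidable P], (0:ℝ) ≤ (if P then 2*π else 0) := by
    intro P _; split_ifs <;> positivity
  rw [abs_of_nonneg (Finset.sum_nonneg (fun r _ => by positivity))]
  have hsplit : ∑ r ∈ Finset.range e,
      ((if (l + e - 2*r : ℤ) = 0 then 2*π else (0:ℝ))
          + (if (2*r - e + 2 + l : ℤ) = 0 then 2*π else 0)
          + (if (- l + e - 2*r : ℤ) = 0 then 2*π else 0)
          + (if (2*r - e + 2 - l : ℤ) = 0 then 2*π else 0)) / 4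
      = ((∑ r ∈ Finset.range e, if (l + e - 2*r : ℤ) = 0 then 2*π else (0:ℝ))
        + (∑ r ∈ Finset.range e, if (2*r - e + 2 + l : ℤ) = 0 then 2*π else (0:ℝ))
        + (∑ r ∈ Finset.range e, if (- l + e - 2*r : ℤ) = 0 then 2*π else (0:ℝ))
        + (∑ r ∈ Finset.range e, if (2*r - e + 2 - l : ℤ) = 0 then 2*π else (0:ℝ))) / 4 := by
    rw [← Finset.sum_add_distrib, ← Finset.sum_add_distrib, ← Finset.sum_add_distrib,
        ← Finset.sum_div]
  rw [hsplit]
  have b1 := sum_if_le hpi e (fun r => (l + e - 2*r : ℤ)) (fun r s h => by omega)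
  have b2 := sum_if_le hpi e (fun r => (2*r - e + 2 + l : ℤ)) (fun r s h => by omega)
  have b3 := sum_if_le hpi e (fun r => (- l + e - 2*r : ℤ)) (fun r s h => by omega)
  have b4 := sum_if_le hpi e (fun r => (2*r - e + 2 - l : ℤ)) (fun r s h => by omega)
  linarith


def Good (t : ℤ) (P : ℝ → ℝ) : Prop :=
  ∃ (ι : Type) (s : Finset ι) (c : ι → ℝ) (l : ι → ℤ),
    (∀ i ∈ s, 0 ≤ c i) ∧ (∀ i ∈ s, l i % 2 = t % 2) ∧ (∑ i ∈ s, c i ≤ 1) ∧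
    (∀ η : ℝ, Real.sin (η/2) ≠ 0 → P η = ∑ i ∈ s, c i * Real.cos ((l i : ℝ) * η / 2))

lemma good_one : Good 0 (fun _ => 1) := by
  refine ⟨Unit, Finset.univ, fun _ => 1, fun _ => 0, fun _ _ => zero_le_one, fun _ _ => rfl, by simp, ?_⟩
  intro η _
  simp

lemma good_ker (d : ℤ) (hd : d ≠ 0) :
    Good (d+1) (fun η => Real.sin ((d:ℝ)*η/2) / ((d:ℝ) * Real.sin (η/2))) := by
  refine ⟨ℕ, Finset.range d.natAbs, fun _ => 1/(d.natAbs:ℝ), fun r => 2*r - d.natAbs + 1,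
    fun _ _ => by positivity, fun i _ => by dsimp only; omega, ?_, ?_⟩
  · have hne : (0:ℝ) < (d.natAbs:ℝ) := by
      have : d.natAbs ≠ 0 := Int.natAbs_ne_zero.mpr hd
      positivity
    rw [Finset.sum_const, Finset.card_range, nsmul_eq_mul]
    rw [mul_one_div, div_self hne.ne']
  · intro η h
    dsimp only
    have hD := sin_mul_Dk d.natAbs η
    have key : Real.sin ((d:ℝ)*η/2) / ((d:ℝ) * Real.sin (η/2)) = Dk d.natAbs η / (d.natAbs : ℝ) := by
      rcases lt_or_lt_iff_ne.mpr hd with hm | hm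
      · have hcast : ((d.natAbs : ℕ) : ℝ) = -(d : ℝ) := by
          rw [Nat.cast_natAbs]
          exact_mod_cast congrArg (Int.cast : ℤ → ℝ) (abs_of_nonpos hm.le)
        have hs : Real.sin ((d:ℝ)*η/2) = - Real.sin ((d.natAbs : ℝ) * η / 2) := by
          rw [hcast, show -(d:ℝ) * η / 2 = -((d:ℝ) * η / 2) by ring, Real.sin_neg, neg_neg]
        have hd' : (d:ℝ) ≠ 0 := Int.cast_ne_zero.mpr hd
        rw [hs, ← hD]
        field_simp
        rw [hcast]
        ring
      · have hcast : ((d.natAbs : ℕ) : ℝ) = (d : ℝ) := by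
          rw [Nat.cast_natAbs]
          exact_mod_cast congrArg (Int.cast : ℤ → ℝ) (abs_of_nonneg hm.le)
        have hd' : (d:ℝ) ≠ 0 := Int.cast_ne_zero.mpr hd
        rw [← hcast, ← hD]
        field_simp
    rw [key]
    unfold Dk
    rw [Finset.sum_div]
    refine Finset.sum_congr rfl (fun r _ => ?_)
    rw [one_div, inv_mul_eq_div]

lemma good_mul {t u : ℤ} {P Q : ℝ → ℝ} (hP : Good t P) (hQ : Good u Q) :
    Good (t+u) (fun η => P η * Q η) := by
  obtain ⟨ι, s, c, l, hc, hl, hsum, hval⟩ := hP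
  obtain ⟨κ, s', c', l', hc', hl', hsum', hval'⟩ := hQ
  refine ⟨ι × κ × Bool, s ×ˢ s' ×ˢ Finset.univ,
    fun p => c p.1 * c' p.2.1 / 2,
    fun p => if p.2.2 then l p.1 + l' p.2.1 else l p.1 - l' p.2.1, ?_, ?_, ?_, ?_⟩
  · rintro ⟨i, j, b⟩ hp
    simp only [Finset.mem_product] at hp
    have := hc i hp.1
    have := hc' j hp.2.1
    positivity
  · rintro ⟨i, j, b⟩ hp
    simp only [Finset.mem_product] at hp
    have h1 := hl i hp.1
    have h2 := hl' j hp.2.1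
    rcases b with _ | _ <;> simp <;> omega
  · rw [Finset.sum_product]
    have : ∀ i ∈ s, (∑ p ∈ s' ×ˢ (Finset.univ : Finset Bool), c i * c' p.1 / 2) = c i * ∑ j ∈ s', c' j := by
      intro i _
      rw [Finset.sum_product, Finset.mul_sum]
      refine Finset.sum_congr rfl (fun j _ => ?_)
      rw [Fintype.sum_bool]
      ring
    rw [Finset.sum_congr rfl this]
    calc ∑ i ∈ s, c i * ∑ j ∈ s', c' j = (∑ i ∈ s, c i) * (∑ j ∈ s', c' j) := by
          rw [Finset.sum_mul]
      _ ≤ 1 := mul_le_one₀ hsum (Finset.sum_nonneg hc') hsum'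
  · intro η h
    show P η * Q η = _
    rw [hval η h, hval' η h, Finset.sum_mul_sum, Finset.sum_product]
    refine Finset.sum_congr rfl (fun i hi => ?_)
    rw [Finset.sum_product]
    refine Finset.sum_congr rfl (fun j hj => ?_)
    have hcc := Real.two_mul_cos_mul_cos ((l i : ℝ) * η / 2) ((l' j : ℝ) * η / 2)
    have e1 : (l i : ℝ) * η / 2 - (l' j : ℝ) * η / 2 = ((l i - l' j : ℤ) : ℝ) * η / 2 := by
      push_cast; ring
    have e2 : (l i : ℝ) * η / 2 + (l' j : ℝ) * η / 2 = ((l i + l' j : ℤ) : ℝ) * η / 2 := by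
      push_cast; ring
    rw [e1, e2] at hcc
    rw [Fintype.sum_bool]
    norm_num
    push_cast at hcc ⊢
    linear_combination (c i * c' j / 2) * hcc

lemma good_prod (N : ℕ) (d : ℕ → ℤ) (hd : ∀ j, j < N → d j ≠ 0) :
    Good (∑ j ∈ Finset.range N, (d j + 1))
      (fun η => ∏ j ∈ Finset.range N,
        Real.sin (((d j :ℤ):ℝ)*η/2) / (((d j:ℤ):ℝ) * Real.sin (η/2))) := by
  induction N with
  | zero => simpa using good_one
  | succ N ih =>
    have hfe : (fun η => ∏ j ∈ Finset.range (N+1),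
        Real.sin (((d j :ℤ):ℝ)*η/2) / (((d j:ℤ):ℝ) * Real.sin (η/2)))
        = fun η => (∏ j ∈ Finset.range N,
            Real.sin (((d j :ℤ):ℝ)*η/2) / (((d j:ℤ):ℝ) * Real.sin (η/2)))
          * (Real.sin (((d N :ℤ):ℝ)*η/2) / (((d N:ℤ):ℝ) * Real.sin (η/2))) :=
      funext fun η => Finset.prod_range_succ _ _
    rw [hfe, Finset.sum_range_succ]
    exact good_mul (ih (fun j hj => hd j (Nat.lt_succ_of_lt hj))) (good_ker (d N) (hd N (Nat.lt_succ_self N)))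

lemma abs_ISK (m l : ℤ) (hpar : (l + m) % 2 = 0) :
    |∫ η in (-π)..π, Real.cos (η/2) * SK m η * Real.cos ((l:ℝ)*η/2)| ≤ 2*π := by
  have hfe : ∀ η : ℝ, Real.cos (η/2) * SK m η * Real.cos ((l:ℝ)*η/2)
      = (if 0 ≤ m then (1:ℝ) else -1) * (Real.cos (η/2) * Dk m.natAbs η * Real.cos ((l:ℝ)*η/2)) := by
    intro η; unfold SK; ring
  simp_rw [hfe]
  rw [intervalIntegral.integral_const_mul, abs_mul]
  have h1 : |if 0 ≤ m then (1:ℝ) else -1| = 1 := by split_ifs <;> simp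
  rw [h1, one_mul]
  exact ICDC m.natAbs l (by omega)

lemma key_bound (m t : ℤ) (P : ℝ → ℝ) (hP : Good t P) (hpar : (t + m) % 2 = 0) :
    |∫ η in (-π)..π, Real.cos (η/2) * (Real.sin ((m:ℝ)*η/2) / Real.sin (η/2)) * P η| ≤ 2*π := by
  obtain ⟨ι, s, c, l, hc, hl, hsum, hval⟩ := hP
  have hZ : ∀ᵐ η : ℝ, Real.sin (η/2) ≠ 0 := by
    have hsub : {η : ℝ | Real.sin (η/2) = 0} ⊆ Set.range (fun k : ℤ => (k:ℝ) * (2*π)) := by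
      intro η hη
      simp only [Set.mem_setOf_eq, Real.sin_eq_zero_iff] at hη
      obtain ⟨k, hk⟩ := hη
      refine ⟨k, ?_⟩
      show (k:ℝ) * (2*π) = η
      rw [show (k:ℝ) * (2*π) = 2 * ((k:ℝ)*π) by ring, hk]; ring
    have h0 := ((Set.countable_range (fun k : ℤ => (k:ℝ) * (2*π))).mono hsub).measure_zero
      (MeasureTheory.volume)
    have := MeasureTheory.measure_eq_zero_iff_ae_notMem.mp h0
    filter_upwards [this] with η hη
    simpa using hη
  have hcongr : (∫ η in (-π)..π, Real.cos (η/2) * (Real.sin ((m:ℝ)*η/2) / Real.sin (η/2)) * P η)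
      = ∫ η in (-π)..π, ∑ i ∈ s, c i * (Real.cos (η/2) * SK m η * Real.cos ((l i : ℝ)*η/2)) := by
    apply intervalIntegral.integral_congr_ae
    filter_upwards [hZ] with η hη _
    rw [SK_spec m η hη, hval η hη, Finset.mul_sum]
    exact Finset.sum_congr rfl (fun i _ => by ring)
  rw [hcongr, intervalIntegral.integral_finset_sum]
  swap
  · intro i _
    apply Continuous.intervalIntegrable
    exact continuous_const.mul (((Real.continuous_cos.comp (by continuity)).mul (SK_continuous m)).mul
      (Real.continuous_cos.comp (by continuity)))
  calc |∑ i ∈ s, ∫ η in (-π)..π, c i * (Real.cos (η/2) * SK m η * Real.cos ((l i : ℝ)*η/2))|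
      ≤ ∑ i ∈ s, |∫ η in (-π)..π, c i * (Real.cos (η/2) * SK m η * Real.cos ((l i : ℝ)*η/2))| :=
        Finset.abs_sum_le_sum_abs _ _
    _ ≤ ∑ i ∈ s, c i * (2*π) := by
        refine Finset.sum_le_sum (fun i hi => ?_)
        rw [intervalIntegral.integral_const_mul, abs_mul, abs_of_nonneg (hc i hi)]
        have hp : (l i + m) % 2 = 0 := by have := hl i hi; omega
        exact mul_le_mul_of_nonneg_left (abs_ISK m (l i) hp) (hc i hi)
    _ = (∑ i ∈ s, c i) * (2*π) := by rw [Finset.sum_mul]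
    _ ≤ 1 * (2*π) := by
        apply mul_le_mul_of_nonneg_right hsum (by positivity)
    _ = 2*π := one_mul _

/-- Lemma (uniform bound for the integrals `I''ₙ`): for `n ≥ 1` and integers
`k₀, k₁, …, k_{2n}` with `|k_j − k_{j+1}| ≥ 1` for `j = 0, 1, …, 2n−1`, the integral
`I''ₙ = ∫_{−π}^{π} cos(η/2) · [sin((k₀+k_{2n})η/2)/sin(η/2)]
  · ∏_{j=0}^{2n−1} sin((k_j−k_{j+1})η/2)/((k_j−k_{j+1}) sin(η/2))`
satisfies `|I''ₙ| ≤ 2π`. -/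
theorem abs_In''_le_two_pi (n : ℕ) (hn : 1 ≤ n) (k : ℕ → ℤ)
    (hk : ∀ j, j ≤ 2 * n - 1 → 1 ≤ |k j - k (j + 1)|) :
    |∫ η in (-π)..π,
        Real.cos (η / 2) *
          (Real.sin (((k 0 + k (2 * n) : ℤ) : ℝ) * η / 2) / Real.sin (η / 2)) *
          ∏ j ∈ Finset.range (2 * n),
            Real.sin (((k j - k (j + 1) : ℤ) : ℝ) * η / 2) /
              (((k j - k (j + 1) : ℤ) : ℝ) * Real.sin (η / 2))|
      ≤ 2 * π := by
  have hd : ∀ j, j < 2 * n → (k j - k (j + 1)) ≠ 0 := by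
    intro j hj
    have h1 := hk j (by omega)
    exact abs_pos.mp (lt_of_lt_of_le Int.zero_lt_one h1)
  have hP := good_prod (2 * n) (fun j => k j - k (j + 1)) hd
  have ht : ∑ j ∈ Finset.range (2 * n), ((k j - k (j + 1)) + 1)
      = (k 0 - k (2 * n)) + 2 * n := by
    rw [Finset.sum_add_distrib, Finset.sum_range_sub' k, Finset.sum_const, Finset.card_range]
    simp
  have hpar : ((∑ j ∈ Finset.range (2 * n), ((k j - k (j + 1)) + 1)) + (k 0 + k (2 * n))) % 2 = 0 := by
    rw [ht]; omega
  exact key_bound (k 0 + k (2 * n)) _ _ hP hpar
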